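/- (Truth preservation of splitting one variable in the 3-QBF-3 reduction.) Let ψ = Q₁x₁⋯Qₙxₙ φ be a quantified CNF formula and let xᵢ be a variable appearing in exactly 3k clauses Cᵢ₁,…,Cᵢ₍₃ₖ₎ (k ≥ 1). Let ψ' be obtained from ψ as follows: replace the quantifier block Qᵢxᵢ by Qᵢ xᵢ¹ ∃xᵢ² ∃xᵢ³ ⋯ ∃xᵢ³ᵏ ∀yᵢ¹ ⋯ ∀yᵢᵏ (fresh variables, quantified at position i in this order); in each clause Cᵢⱼ replace the occurrence of xᵢ by xᵢʲ; and add the 3k clauses xᵢʲ ∨ ¬xᵢʲ⁺¹ ∨ yᵢ⌈j/3⌉ for 1 ≤ j ≤ 3k (with xᵢ³ᵏ⁺¹ = xᵢ¹). Then ψ is true if and only if ψ' is true. -/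

import Mathlib

/-- Quantifiers for quantified Boolean formulas. -/
inductive Quant
  | ex  : Quant
  | all : Quant

/-- A clause: a finite set of literals, a literal being a pair of a variable
(variables are indexed by `ℕ`, the index `v` representing `x_{v+1}`) and a
polarity (`true` for the variable, `false` for its negation). -/
abbrev Clause := Finset (ℕ × Bool)

/-- A CNF formula: a finite list of clauses. -/
abbrev CNF := List Clause

/-- A valuation `ν` satisfies a CNF formula `φ` if every clause of `φ`
contains a literal made true by `ν`. -/
def CNF.sat (ν : ℕ → Bool) (φ : CNF) : Prop :=
  ∀ C ∈ φ, ∃ l ∈ C, ν l.1 = l.2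

/-- Auxiliary truth predicate: quantify the values of the variables
`i, i + 1, …` according to the remaining quantifier list, on top of the
partial valuation `ν`. -/
def QbfTrueAux (φ : CNF) : List Quant → ℕ → (ℕ → Bool) → Prop
  | [], _, ν => CNF.sat ν φ
  | Quant.ex :: qs, i, ν => ∃ b, QbfTrueAux φ qs (i + 1) (Function.update ν i b)
  | Quant.all :: qs, i, ν => ∀ b, QbfTrueAux φ qs (i + 1) (Function.update ν i b)

/-- Truth of the quantified Boolean formula `Q₁x₁ ⋯ Qₙxₙ φ`, where
`qs = [Q₁, …, Qₙ]` and the variables `0, …, n - 1` (representing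
`x₁, …, xₙ`) are quantified in this order. -/
def QbfTrue (qs : List Quant) (φ : CNF) : Prop :=
  QbfTrueAux φ qs 0 (fun _ => false)

/-- The degree of a variable `v` in a CNF formula: the number of clauses in
which `v` appears, in either polarity. -/
def degree (φ : CNF) (v : ℕ) : ℕ :=
  φ.countP (fun C => decide (∃ b : Bool, (v, b) ∈ C))

/-- The number of clauses among the first `c` clauses of `φ` in which the
variable `v` appears. -/
def occ (φ : CNF) (v c : ℕ) : ℕ :=
  (φ.take c).countP (fun C => decide (∃ b : Bool, (v, b) ∈ C))

/-- Renaming of the variables other than the split variable `i₀`: the fresh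
block `xᵢ¹, …, xᵢ³ᵏ, yᵢ¹, …, yᵢᵏ` occupies the `4k` indices
`i₀, …, i₀ + 4k - 1`, so variables above `i₀` are shifted by `4k - 1`. -/
def rename (i₀ k v : ℕ) : ℕ :=
  if v < i₀ then v else v + (4 * k - 1)

/-- The clause at position `c` of `φ`, with the occurrence of the split
variable `i₀` (this is its `occ φ i₀ c + 1`-st occurrence, replaced by the
fresh variable `xᵢ^(occ φ i₀ c + 1)`, of index `i₀ + occ φ i₀ c`) and the other
variables renamed. -/
def splitClause (φ : CNF) (i₀ k c : ℕ) (C : Clause) : Clause :=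
  C.image (fun l =>
    (if l.1 = i₀ then i₀ + occ φ i₀ c else rename i₀ k l.1, l.2))

/-- The CNF formula of the splitting construction: the clauses of `φ` with the
`j`-th occurrence of the variable `i₀` replaced by `xᵢʲ` (of index
`i₀ + j - 1`), together with the `3k` gadget clauses
`xᵢʲ ∨ ¬xᵢ^(j+1) ∨ yᵢ^⌈j/3⌉` for `1 ≤ j ≤ 3k` (with `xᵢ^(3k+1) = xᵢ¹`; the
variable `yᵢˡ` has index `i₀ + 3k + l - 1`). -/
def splitCNF (φ : CNF) (i₀ k : ℕ) : CNF :=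
  φ.zipIdx.map (fun p => splitClause φ i₀ k p.2 p.1) ++
    (List.range (3 * k)).map (fun j =>
      ({(i₀ + j, true),
        (i₀ + (j + 1) % (3 * k), false),
        (i₀ + 3 * k + j / 3, true)} : Clause))

-- update-with-list
def updL (ν : ℕ → Bool) : ℕ → List Bool → (ℕ → Bool)
  | _, [] => ν
  | i, b :: L => updL (Function.update ν i b) (i+1) L

lemma updL_lt : ∀ (L : List Bool) (i : ℕ) (ν : ℕ → Bool) (v : ℕ), v < i → updL ν i L v = ν v
  | [], _, _, _, _ => rfl
  | b :: L, i, ν, v, h => by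
      rw [updL, updL_lt L (i+1) _ v (by omega), Function.update_of_ne (by omega)]

lemma updL_ge : ∀ (L : List Bool) (i : ℕ) (ν : ℕ → Bool) (v : ℕ), i + L.length ≤ v → updL ν i L v = ν v
  | [], _, _, _, _ => rfl
  | b :: L, i, ν, v, h => by
      rw [updL, updL_ge L (i+1) _ v (by simp at h ⊢; omega),
        Function.update_of_ne (by simp at h; omega)]

lemma updL_get : ∀ (L : List Bool) (i : ℕ) (ν : ℕ → Bool) (t : ℕ), t < L.length →
    updL ν i L (i + t) = L.getD t false
  | [], _, _, _, h => by simp at h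
  | b :: L, i, ν, t, h => by
      cases t with
      | zero => simp only [Nat.add_zero]; rw [updL, updL_lt L (i+1) _ i (by omega)]; simp
      | succ t =>
          rw [updL, show i + (t+1) = (i+1) + t by omega,
            updL_get L (i+1) _ t (by simpa using h)]
          simp

-- existential/universal blocks
lemma exList (φ : CNF) : ∀ (m : ℕ) (rest : List Quant) (i : ℕ) (ν : ℕ → Bool),
    QbfTrueAux φ (List.replicate m Quant.ex ++ rest) i ν ↔
      ∃ L : List Bool, L.length = m ∧ QbfTrueAux φ rest (i + m) (updL ν i L) := by
  intro m
  induction m with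
  | zero =>
      intro rest i ν
      constructor
      · intro h; exact ⟨[], rfl, h⟩
      · rintro ⟨L, hL, h⟩
        rw [List.length_eq_zero_iff] at hL; subst hL; exact h
  | succ m ih =>
      intro rest i ν
      rw [List.replicate_succ]
      show (∃ b, QbfTrueAux φ (List.replicate m Quant.ex ++ rest) (i+1) (Function.update ν i b)) ↔ _
      constructor
      · rintro ⟨b, h⟩
        obtain ⟨L, hL, h⟩ := (ih rest (i+1) _).1 h
        exact ⟨b :: L, by simp [hL], by rw [show i + (m+1) = i + 1 + m by omega]; exact h⟩
      · rintro ⟨L, hL, h⟩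
        match L, hL with
        | b :: L, hL =>
          exact ⟨b, (ih rest (i+1) _).2 ⟨L, by simpa using hL,
            by rw [show i + 1 + m = i + (m+1) by omega]; exact h⟩⟩

lemma allList (φ : CNF) : ∀ (m : ℕ) (rest : List Quant) (i : ℕ) (ν : ℕ → Bool),
    QbfTrueAux φ (List.replicate m Quant.all ++ rest) i ν ↔
      ∀ L : List Bool, L.length = m → QbfTrueAux φ rest (i + m) (updL ν i L) := by
  intro m
  induction m with
  | zero =>
      intro rest i ν
      constructor
      · intro h L hL; rw [List.length_eq_zero_iff] at hL; subst hL; exact h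
      · intro h; exact h [] rfl
  | succ m ih =>
      intro rest i ν
      rw [List.replicate_succ]
      show (∀ b, QbfTrueAux φ (List.replicate m Quant.all ++ rest) (i+1) (Function.update ν i b)) ↔ _
      constructor
      · intro h L hL
        match L, hL with
        | b :: L, hL =>
          have := (ih rest (i+1) _).1 (h b) L (by simpa using hL)
          rw [show i + 1 + m = i + (m+1) by omega] at this; exact this
      · intro h b
        refine (ih rest (i+1) _).2 ?_
        intro L hL
        have := h (b :: L) (by simp [hL])
        rw [show i + (m+1) = i + 1 + m by omega] at this; exact this
-- occurrence count bound
lemma occ_lt (φ : CNF) (i₀ k : ℕ) (hdeg : degree φ i₀ = 3 * k)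
    (c : ℕ) (hc : c < φ.length) (hb : ∃ b : Bool, (i₀, b) ∈ φ[c]) :
    occ φ i₀ c < 3 * k := by
  have h1 : occ φ i₀ c + 1 ≤ degree φ i₀ := by
    have : (φ.take (c+1)).countP (fun C => decide (∃ b : Bool, (i₀, b) ∈ C)) ≤ degree φ i₀ :=
      List.Sublist.countP_le (List.take_sublist _ _)
    rw [List.take_succ] at this
    rw [List.countP_append] at this
    simp only [List.getElem?_eq_getElem hc] at this
    unfold occ
    simp only [Option.toList_some, List.countP_cons, List.countP_nil] at this
    rw [decide_eq_true hb] at this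
    simpa using this
  omega

-- main satisfaction correspondence
lemma sat_corr (φ : CNF) (i₀ k : ℕ) (hk : 1 ≤ k) (hdeg : degree φ i₀ = 3 * k)
    (ν ν' : ℕ → Bool)
    (h1 : ∀ C ∈ φ, ∀ l ∈ C, l.1 ≠ i₀ → ν' (rename i₀ k l.1) = ν l.1)
    (h2 : ∀ j < 3 * k, ν' (i₀ + j) = ν i₀) :
    CNF.sat ν' (splitCNF φ i₀ k) ↔ CNF.sat ν φ := by
  have key : ∀ c (hc : c < φ.length), ∀ l ∈ φ[c],
      ν' (if l.1 = i₀ then i₀ + occ φ i₀ c else rename i₀ k l.1) = ν l.1 := by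
    intro c hc l hl
    by_cases hli : l.1 = i₀
    · simp only [hli, if_pos rfl]
      exact h2 _ (occ_lt φ i₀ k hdeg c hc ⟨l.2, by rw [← hli]; exact hl⟩)
    · rw [if_neg hli]
      exact h1 _ (List.getElem_mem hc) l hl hli
  constructor
  · intro hs C hC
    rw [List.mem_iff_getElem] at hC
    obtain ⟨c, hc, rfl⟩ := hC
    have hmem : splitClause φ i₀ k c φ[c] ∈ splitCNF φ i₀ k := by
      apply List.mem_append_left
      apply List.mem_map.2
      refine ⟨(φ[c], c), ?_, rfl⟩
      exact List.mem_iff_getElem.2 ⟨c, by simpa [List.length_zipIdx] using hc,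
        by rw [List.getElem_zipIdx, Nat.zero_add]⟩
    obtain ⟨l', hl', hv⟩ := hs _ hmem
    rw [splitClause, Finset.mem_image] at hl'
    obtain ⟨l, hl, rfl⟩ := hl'
    exact ⟨l, hl, by rw [← hv]; exact (key c hc l hl).symm⟩
  · intro hs C' hC'
    rw [splitCNF, List.mem_append] at hC'
    rcases hC' with hC' | hC'
    · obtain ⟨⟨C, c⟩, hp, rfl⟩ := List.mem_map.1 hC'
      rw [List.mem_iff_getElem] at hp
      obtain ⟨j, hj, hget⟩ := hp
      rw [List.getElem_zipIdx, Nat.zero_add] at hget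
      obtain ⟨rfl, rfl⟩ := Prod.mk.injEq .. ▸ (Prod.ext_iff.1 hget.symm)
      have hc : c < φ.length := by simpa [List.length_zipIdx] using hj
      obtain ⟨l, hl, hv⟩ := hs φ[c] (List.getElem_mem hc)
      refine ⟨_, Finset.mem_image_of_mem _ hl, ?_⟩
      simp only
      rw [key c hc l hl, hv]
    · obtain ⟨j, hj, rfl⟩ := List.mem_map.1 hC'
      rw [List.mem_range] at hj
      cases hb : ν i₀ with
      | true =>
          refine ⟨(i₀ + j, true), by simp, ?_⟩
          simpa using (h2 j hj).trans hb
      | false =>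
          refine ⟨(i₀ + (j + 1) % (3 * k), false), by simp, ?_⟩
          simpa using (h2 _ (Nat.mod_lt _ (by omega))).trans hb
-- a permanently falsified clause kills truth
lemma falsified (ψ : CNF) : ∀ (qs : List Quant) (i : ℕ) (ν : ℕ → Bool)
    (C : Clause) (hC : C ∈ ψ) (hf : ∀ l ∈ C, l.1 < i ∧ ν l.1 ≠ l.2),
    ¬ QbfTrueAux ψ qs i ν
  | [], i, ν, C, hC, hf, h => by
      obtain ⟨l, hl, hv⟩ := h C hC
      exact (hf l hl).2 hv
  | Quant.ex :: qs, i, ν, C, hC, hf, h => by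
      obtain ⟨b, h⟩ := h
      exact falsified ψ qs (i+1) _ C hC
        (fun l hl => ⟨by have := (hf l hl).1; omega,
          by rw [Function.update_of_ne (by have := (hf l hl).1; omega)]; exact (hf l hl).2⟩) h
  | Quant.all :: qs, i, ν, C, hC, hf, h =>
      falsified ψ qs (i+1) _ C hC
        (fun l hl => ⟨by have := (hf l hl).1; omega,
          by rw [Function.update_of_ne (by have := (hf l hl).1; omega)]; exact (hf l hl).2⟩)
        (h false)

-- cyclic propagation
lemma cyc (g : ℕ → Bool) (m : ℕ) (hm : 1 ≤ m)
    (h : ∀ j < m, ¬(g j = false ∧ g ((j + 1) % m) = true)) :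
    ∀ j < m, g j = g 0 := by
  have step : ∀ j < m, g j = false → g ((j + 1) % m) = false := by
    intro j hj hgj
    cases hg : g ((j+1) % m) with
    | false => rfl
    | true => exact absurd ⟨hgj, hg⟩ (h j hj)
  have prop : ∀ d j, j < m → g j = false → j + d < m → g (j + d) = false := by
    intro d
    induction d with
    | zero => intro j _ h0 _; simpa using h0
    | succ d ih =>
        intro j hj h0 hd
        have := step (j + d) (by omega) (ih j hj h0 (by omega))
        rw [Nat.mod_eq_of_lt (by omega)] at this
        simpa [show j + (d+1) = j + d + 1 by omega] using this
  cases h0 : g 0 with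
  | false =>
      intro j hj
      simpa using prop j 0 hm h0 (by omega)
  | true =>
      intro j hj
      cases hg : g j with
      | true => rfl
      | false =>
          exfalso
          have hlast : g (m - 1) = false := by
            have := prop (m - 1 - j) j hj hg (by omega)
            rwa [show j + (m - 1 - j) = m - 1 by omega] at this
          have := step (m - 1) (by omega) hlast
          rw [show m - 1 + 1 = m by omega, Nat.mod_self] at this
          rw [h0] at this
          simp at this

-- tail correspondence
lemma tailCorr (φ : CNF) (i₀ k : ℕ) (hk : 1 ≤ k) (hdeg : degree φ i₀ = 3 * k) :
    ∀ (qs : List Quant) (i : ℕ) (ν ν' : ℕ → Bool), i₀ < i →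
    (∀ C ∈ φ, ∀ l ∈ C, l.1 < i + qs.length) →
    (∀ v < i₀, ν' v = ν v) →
    (∀ j < 3 * k, ν' (i₀ + j) = ν i₀) →
    (∀ v, i₀ < v → v < i → ν' (v + (4 * k - 1)) = ν v) →
    (QbfTrueAux φ qs i ν ↔ QbfTrueAux (splitCNF φ i₀ k) qs (i + (4 * k - 1)) ν') := by
  intro qs
  induction qs with
  | nil =>
      intro i ν ν' hi hb h1 h2 h3
      show CNF.sat ν φ ↔ CNF.sat ν' (splitCNF φ i₀ k)
      rw [sat_corr φ i₀ k hk hdeg ν ν' ?_ h2]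
      intro C hC l hl hne
      have hlt : l.1 < i := by simpa using hb C hC l hl
      unfold rename
      by_cases h : l.1 < i₀
      · rw [if_pos h]; exact h1 _ h
      · rw [if_neg h]; exact h3 _ (by omega) hlt
  | cons q qs ih =>
      intro i ν ν' hi hb h1 h2 h3
      have hb' : ∀ C ∈ φ, ∀ l ∈ C, l.1 < (i + 1) + qs.length := by
        intro C hC l hl; have := hb C hC l hl; simp at this ⊢; omega
      have harith : (i + 1) + (4 * k - 1) = (i + (4 * k - 1)) + 1 := by omega
      have hcond : ∀ b : Bool,
          (∀ v < i₀, Function.update ν' (i + (4*k-1)) b v = Function.update ν i b v) ∧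
          (∀ j < 3 * k, Function.update ν' (i + (4*k-1)) b (i₀ + j) = Function.update ν i b i₀) ∧
          (∀ v, i₀ < v → v < i + 1 →
            Function.update ν' (i + (4*k-1)) b (v + (4*k-1)) = Function.update ν i b v) := by
        intro b
        refine ⟨?_, ?_, ?_⟩
        · intro v hv
          rw [Function.update_of_ne (by omega), Function.update_of_ne (by omega)]
          exact h1 v hv
        · intro j hj
          rw [Function.update_of_ne (by omega), Function.update_of_ne (by omega)]
          exact h2 j hj
        · intro v hv1 hv2
          by_cases hvi : v = i
          · subst hvi
            rw [Function.update_self, Function.update_self]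
          · rw [Function.update_of_ne (by omega), Function.update_of_ne hvi]
            exact h3 v hv1 (by omega)
      cases q with
      | ex =>
          show (∃ b, QbfTrueAux φ qs (i+1) _) ↔ (∃ b, QbfTrueAux _ qs (i + (4*k-1) + 1) _)
          refine exists_congr fun b => ?_
          obtain ⟨c1, c2, c3⟩ := hcond b
          have := ih (i+1) (Function.update ν i b) (Function.update ν' (i + (4*k-1)) b)
            (by omega) hb' c1 c2 c3
          rwa [harith] at this
      | all =>
          show (∀ b, QbfTrueAux φ qs (i+1) _) ↔ (∀ b, QbfTrueAux _ qs (i + (4*k-1) + 1) _)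
          refine forall_congr' fun b => ?_
          obtain ⟨c1, c2, c3⟩ := hcond b
          have := ih (i+1) (Function.update ν i b) (Function.update ν' (i + (4*k-1)) b)
            (by omega) hb' c1 c2 c3
          rwa [harith] at this
lemma getD_replicate (n t : ℕ) (a d : Bool) (h : t < n) :
    (List.replicate n a).getD t d = a := by
  rw [List.getD_eq_getElem?_getD, List.getElem?_replicate, if_pos h]
  rfl

lemma midCorr (φ : CNF) (i₀ k : ℕ) (hk : 1 ≤ k) (hdeg : degree φ i₀ = 3 * k)
    (qs₂ : List Quant) (hvars : ∀ C ∈ φ, ∀ l ∈ C, l.1 < i₀ + 1 + qs₂.length)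
    (b : Bool) (ν ν' : ℕ → Bool) (hνν' : ∀ v < i₀, ν' v = ν v) :
    QbfTrueAux φ qs₂ (i₀ + 1) (Function.update ν i₀ b) ↔
      QbfTrueAux (splitCNF φ i₀ k)
        (List.replicate (3 * k - 1) Quant.ex ++ (List.replicate k Quant.all ++ qs₂))
        (i₀ + 1) (Function.update ν' i₀ b) := by
  set φ' := splitCNF φ i₀ k with hφ'
  rw [exList]
  have hidx1 : (i₀ + 1) + (3 * k - 1) = i₀ + 3 * k := by omega
  have fact0 : ∀ (Lx Ly : List Bool), Lx.length = 3 * k - 1 →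
      ∀ v < i₀, updL (updL (Function.update ν' i₀ b) (i₀+1) Lx) (i₀ + 3*k) Ly v = ν' v := by
    intro Lx Ly hLx v hv
    rw [updL_lt _ _ _ _ (by omega), updL_lt _ _ _ _ (by omega),
      Function.update_of_ne (show v ≠ i₀ by omega)]
  have fact1 : ∀ (Lx Ly : List Bool), Lx.length = 3 * k - 1 →
      updL (updL (Function.update ν' i₀ b) (i₀+1) Lx) (i₀ + 3*k) Ly i₀ = b := by
    intro Lx Ly hLx
    rw [updL_lt _ _ _ _ (by omega), updL_lt _ _ _ _ (by omega), Function.update_self]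
  have fact2 : ∀ (Lx Ly : List Bool), Lx.length = 3 * k - 1 →
      ∀ j, 1 ≤ j → j < 3 * k →
      updL (updL (Function.update ν' i₀ b) (i₀+1) Lx) (i₀ + 3*k) Ly (i₀ + j) =
        Lx.getD (j - 1) false := by
    intro Lx Ly hLx j hj1 hj2
    rw [updL_lt _ _ _ _ (by omega), show i₀ + j = (i₀ + 1) + (j - 1) by omega,
      updL_get _ _ _ _ (by omega)]
  have fact3 : ∀ (Lx Ly : List Bool), Lx.length = 3 * k - 1 → Ly.length = k →
      ∀ t < k,
      updL (updL (Function.update ν' i₀ b) (i₀+1) Lx) (i₀ + 3*k) Ly (i₀ + 3*k + t) =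
        Ly.getD t false := by
    intro Lx Ly hLx hLy t ht
    rw [updL_get _ _ _ _ (by omega)]
  constructor
  · -- forward
    intro hL
    refine ⟨List.replicate (3 * k - 1) b, by simp, ?_⟩
    rw [allList]
    intro Ly hLy
    set Lx := List.replicate (3 * k - 1) b with hLxdef
    have hLx : Lx.length = 3 * k - 1 := by simp [hLxdef]
    rw [hidx1]
    have c1 : ∀ v < i₀,
        updL (updL (Function.update ν' i₀ b) (i₀+1) Lx) (i₀ + 3*k) Ly v =
          Function.update ν i₀ b v := by
      intro v hv
      rw [fact0 Lx Ly hLx v hv, hνν' v hv, Function.update_of_ne (show v ≠ i₀ by omega)]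
    have c2 : ∀ j < 3 * k,
        updL (updL (Function.update ν' i₀ b) (i₀+1) Lx) (i₀ + 3*k) Ly (i₀ + j) =
          Function.update ν i₀ b i₀ := by
      intro j hj
      rw [Function.update_self]
      rcases Nat.eq_zero_or_pos j with rfl | hj1
      · simpa using fact1 Lx Ly hLx
      · rw [fact2 Lx Ly hLx j hj1 hj, hLxdef, getD_replicate _ _ _ _ (by omega)]
    have c3 : ∀ v, i₀ < v → v < i₀ + 1 →
        updL (updL (Function.update ν' i₀ b) (i₀+1) Lx) (i₀ + 3*k) Ly (v + (4*k-1)) =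
          Function.update ν i₀ b v := by
      intro v hv1 hv2; omega
    have := (tailCorr φ i₀ k hk hdeg qs₂ (i₀ + 1) (Function.update ν i₀ b)
      (updL (updL (Function.update ν' i₀ b) (i₀+1) Lx) (i₀ + 3*k) Ly)
      (by omega) (by simpa using hvars) c1 c2 c3).1 hL
    rwa [show (i₀ + 1) + (4 * k - 1) = i₀ + 3*k + k by omega] at this
  · -- backward
    rintro ⟨Lx, hLx, hall⟩
    rw [allList] at hall
    have R0 := hall (List.replicate k false) (by simp)
    rw [hidx1] at R0
    set ν'' := updL (updL (Function.update ν' i₀ b) (i₀+1) Lx) (i₀ + 3*k)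
      (List.replicate k false) with hν''
    set g : ℕ → Bool := fun j => ν'' (i₀ + j) with hg
    have hstep : ∀ j < 3 * k, ¬(g j = false ∧ g ((j + 1) % (3 * k)) = true) := by
      rintro j hj ⟨e1, e2⟩
      refine falsified φ' qs₂ (i₀ + 3*k + k) ν''
        ({(i₀ + j, true), (i₀ + (j + 1) % (3 * k), false),
          (i₀ + 3 * k + j / 3, true)} : Clause) ?_ ?_ R0
      · apply List.mem_append_right
        exact List.mem_map.2 ⟨j, List.mem_range.2 hj, rfl⟩
      · intro l hl
        simp only [Finset.mem_insert, Finset.mem_singleton] at hl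
        have hmod : (j + 1) % (3 * k) < 3 * k := Nat.mod_lt _ (by omega)
        have hdiv : j / 3 < k := by omega
        rcases hl with rfl | rfl | rfl
        · refine ⟨by omega, ?_⟩
          show ν'' (i₀ + j) ≠ true
          rw [show ν'' (i₀ + j) = g j from rfl, e1]; simp
        · refine ⟨by omega, ?_⟩
          show ν'' (i₀ + (j + 1) % (3 * k)) ≠ false
          rw [show ν'' (i₀ + (j + 1) % (3 * k)) = g ((j + 1) % (3 * k)) from rfl, e2]; simp
        · refine ⟨by omega, ?_⟩
          show ν'' (i₀ + 3 * k + j / 3) ≠ true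
          rw [hν'', fact3 Lx _ hLx (by simp) _ hdiv, getD_replicate _ _ _ _ hdiv]
          simp
    have hg0 : g 0 = b := by
      have := fact1 Lx (List.replicate k false) hLx
      rw [hg]; simp only [Nat.add_zero]; exact this
    have hall_eq : ∀ j < 3 * k, g j = b := by
      intro j hj
      rw [cyc g (3 * k) (by omega) hstep j hj, hg0]
    have c1 : ∀ v < i₀, ν'' v = Function.update ν i₀ b v := by
      intro v hv
      rw [hν'', fact0 Lx _ hLx v hv, hνν' v hv, Function.update_of_ne (show v ≠ i₀ by omega)]
    have c2 : ∀ j < 3 * k, ν'' (i₀ + j) = Function.update ν i₀ b i₀ := by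
      intro j hj
      rw [Function.update_self]
      exact hall_eq j hj
    have c3 : ∀ v, i₀ < v → v < i₀ + 1 → ν'' (v + (4*k-1)) = Function.update ν i₀ b v := by
      intro v hv1 hv2; omega
    refine (tailCorr φ i₀ k hk hdeg qs₂ (i₀ + 1) (Function.update ν i₀ b) ν''
      (by omega) (by simpa using hvars) c1 c2 c3).2 ?_
    rwa [show (i₀ + 1) + (4 * k - 1) = i₀ + 3*k + k by omega]

lemma prefixCorr (φ : CNF) (i₀ k : ℕ) (hk : 1 ≤ k) (hdeg : degree φ i₀ = 3 * k)
    (qs₂ : List Quant) (hvars : ∀ C ∈ φ, ∀ l ∈ C, l.1 < i₀ + 1 + qs₂.length)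
    (Qi : Quant) :
    ∀ (qs : List Quant) (i : ℕ) (ν ν' : ℕ → Bool), ν = ν' → i + qs.length = i₀ →
    (QbfTrueAux φ (qs ++ Qi :: qs₂) i ν ↔
      QbfTrueAux (splitCNF φ i₀ k)
        (qs ++ (Qi :: (List.replicate (3 * k - 1) Quant.ex ++
          (List.replicate k Quant.all ++ qs₂)))) i ν') := by
  intro qs
  induction qs with
  | nil =>
      intro i ν ν' hνν' hi
      subst hνν'
      simp only [List.length_nil, Nat.add_zero] at hi
      subst hi
      cases Qi with
      | ex =>
          show (∃ b, QbfTrueAux φ qs₂ (i+1) _) ↔ (∃ b, QbfTrueAux _ _ (i+1) _)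
          exact exists_congr fun b =>
            midCorr φ i k hk hdeg qs₂ hvars b ν ν (fun _ _ => rfl)
      | all =>
          show (∀ b, QbfTrueAux φ qs₂ (i+1) _) ↔ (∀ b, QbfTrueAux _ _ (i+1) _)
          exact forall_congr' fun b =>
            midCorr φ i k hk hdeg qs₂ hvars b ν ν (fun _ _ => rfl)
  | cons q qs ih =>
      intro i ν ν' hνν' hi
      subst hνν'
      cases q with
      | ex =>
          show (∃ b, QbfTrueAux φ _ (i+1) _) ↔ (∃ b, QbfTrueAux _ _ (i+1) _)
          exact exists_congr fun b => ih (i+1) _ _ rfl (by simp at hi ⊢; omega)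
      | all =>
          show (∀ b, QbfTrueAux φ _ (i+1) _) ↔ (∀ b, QbfTrueAux _ _ (i+1) _)
          exact forall_congr' fun b => ih (i+1) _ _ rfl (by simp at hi ⊢; omega)

/-- Truth preservation of splitting one variable in the 3-QBF-3 reduction:
let `ψ = Q₁x₁ ⋯ Qₙxₙ φ` be a quantified CNF formula over `x₁, …, xₙ` and let
`xᵢ` (of index `i₀ = qs₁.length`, with quantifier `Qi`) appear in exactly `3k`
clauses of `φ`, `k ≥ 1`. Let `ψ'` be obtained by replacing the quantifier
block `Qᵢxᵢ` by `Qᵢxᵢ¹ ∃xᵢ² ⋯ ∃xᵢ³ᵏ ∀yᵢ¹ ⋯ ∀yᵢᵏ`, replacing the `j`-th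
occurrence of `xᵢ` by `xᵢʲ`, and adding the `3k` clauses
`xᵢʲ ∨ ¬xᵢ^(j+1) ∨ yᵢ^⌈j/3⌉` for `1 ≤ j ≤ 3k` (with `xᵢ^(3k+1) = xᵢ¹`).
Then `ψ` is true iff `ψ'` is true. -/
theorem split_one_variable_truth (qs₁ qs₂ : List Quant) (Qi : Quant)
    (φ : CNF) (k : ℕ) (hk : 1 ≤ k)
    (hvars : ∀ C ∈ φ, ∀ l ∈ C, l.1 < qs₁.length + 1 + qs₂.length)
    (hdeg : degree φ qs₁.length = 3 * k) :
    QbfTrue (qs₁ ++ Qi :: qs₂) φ ↔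
      QbfTrue (qs₁ ++ (Qi :: (List.replicate (3 * k - 1) Quant.ex ++
          List.replicate k Quant.all)) ++ qs₂)
        (splitCNF φ qs₁.length k) := by
  have hlist : (qs₁ ++ (Qi :: (List.replicate (3 * k - 1) Quant.ex ++
      List.replicate k Quant.all)) ++ qs₂) =
      qs₁ ++ (Qi :: (List.replicate (3 * k - 1) Quant.ex ++
        (List.replicate k Quant.all ++ qs₂))) := by
    simp [List.append_assoc]
  rw [QbfTrue, QbfTrue, hlist]
  exact prefixCorr φ qs₁.length k hk hdeg qs₂ hvars Qi qs₁ 0 _ _ rfl (by simp)
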